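/- Let A, Y, S be binary, and Z, U finite-valued random variables on a discrete probability space, all conditioning events having positive probability. Assume: (i) Z ⊥ (Y, S) | (A, U); (ii) P(S=1 | A=a, Y=1, U=u)/P(S=1 | A=a, Y=0, U=u) = exp(h(u)) for both a (selection ratio free of a); (iii) the conditional odds ratio of Y on A given U equals exp(β₀′) for all u; (iv) q̃ satisfies E[q̃(a, Z) | A=a, U=u] = 1/P(A=a | U=u, Y=0, S=1) for all a, u. Then for all u: E[(-1)^{1-A} · q̃(A, Z) · Y · exp(−β₀′·A) | U=u, S=1] = 0. -/

import Mathlib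

open scoped BigOperators
open Real

attribute [local instance] Classical.propDecidable

noncomputable section

variable {Ω : Type*}

/-- Probability of an event under weight function `P` on a finite sample space. -/
def pr [Fintype Ω] (P : Ω → ℝ) (E : Ω → Prop) : ℝ :=
  ∑ ω, if E ω then P ω else 0

/-- Conditional probability `P(E | F)`. -/
def cpr [Fintype Ω] (P : Ω → ℝ) (E F : Ω → Prop) : ℝ :=
  pr P (fun ω => E ω ∧ F ω) / pr P F

/-- Conditional expectation `E[f | F]`. -/
def cexp [Fintype Ω] (P : Ω → ℝ) (f : Ω → ℝ) (F : Ω → Prop) : ℝ :=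
  (∑ ω, if F ω then f ω * P ω else 0) / pr P F

/-- Conditional independence `f ⊥ g | h` under `P`. -/
def CondIndep [Fintype Ω] (P : Ω → ℝ) {α β γ : Type*}
    (f : Ω → α) (g : Ω → β) (h : Ω → γ) : Prop :=
  ∀ a b c, pr P (fun ω => h ω = c) ≠ 0 →
    cpr P (fun ω => f ω = a ∧ g ω = b) (fun ω => h ω = c) =
      cpr P (fun ω => f ω = a) (fun ω => h ω = c) *
        cpr P (fun ω => g ω = b) (fun ω => h ω = c)

lemma pr_nonneg [Fintype Ω] (P : Ω → ℝ) (hP : ∀ ω, 0 ≤ P ω) (E : Ω → Prop) :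
    0 ≤ pr P E := by
  unfold pr
  exact Finset.sum_nonneg fun ω _ => by by_cases h : E ω <;> simp [h, hP ω]

lemma pr_mono [Fintype Ω] (P : Ω → ℝ) (hP : ∀ ω, 0 ≤ P ω) {E F : Ω → Prop}
    (hEF : ∀ ω, E ω → F ω) : pr P E ≤ pr P F := by
  unfold pr
  refine Finset.sum_le_sum fun ω _ => ?_
  by_cases hE : E ω
  · simp [hE, hEF ω hE]
  · by_cases hF : F ω <;> simp [hE, hF, hP ω]

lemma pr_ne [Fintype Ω] (P : Ω → ℝ) (hP : ∀ ω, 0 ≤ P ω) {E F : Ω → Prop}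
    (hEF : ∀ ω, E ω → F ω) (hE : pr P E ≠ 0) : pr P F ≠ 0 := by
  intro h0
  exact hE (le_antisymm (h0 ▸ pr_mono P hP hEF) (pr_nonneg P hP E))

lemma pr_congr [Fintype Ω] (P : Ω → ℝ) {E F : Ω → Prop} (h : ∀ ω, E ω ↔ F ω) :
    pr P E = pr P F :=
  Finset.sum_congr rfl fun ω _ => by simp only [h ω]

lemma sum_fiber [Fintype Ω] {𝒵 : Type*} [Fintype 𝒵] (P : Ω → ℝ) (Z : Ω → 𝒵)
    (g : 𝒵 → ℝ) (F : Ω → Prop) [DecidablePred F] :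
    (∑ ω, if F ω then g (Z ω) * P ω else 0) =
      ∑ z, g z * pr P (fun ω => Z ω = z ∧ F ω) := by
  unfold pr
  simp_rw [Finset.mul_sum, mul_ite, mul_zero]
  rw [Finset.sum_comm]
  refine Finset.sum_congr rfl fun ω _ => ?_
  by_cases hF : F ω
  · simp only [hF, and_true]
    rw [Finset.sum_ite_eq Finset.univ (Z ω) (fun z => g z * P ω)]
    simp
  · simp [hF]

/-- Theorem 1': the negative-control estimating function is
conditionally unbiased for the log causal odds ratio β₀' even under
treatment-induced selection. -/
theorem stmt14 [Fintype Ω] {𝒵 𝒰 : Type*} [Fintype 𝒵] [Fintype 𝒰]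
    (P : Ω → ℝ) (hP : ∀ ω, 0 ≤ P ω) (hPsum : ∑ ω, P ω = 1)
    (A Y S : Ω → ℕ) (Z : Ω → 𝒵) (U : Ω → 𝒰)
    (hA : ∀ ω, A ω = 0 ∨ A ω = 1) (hY : ∀ ω, Y ω = 0 ∨ Y ω = 1)
    (hS : ∀ ω, S ω = 0 ∨ S ω = 1)
    (hpos : ∀ (a y : ℕ) (u : 𝒰), (a = 0 ∨ a = 1) → (y = 0 ∨ y = 1) →
      pr P (fun ω => A ω = a ∧ Y ω = y ∧ U ω = u) ≠ 0 ∧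
      pr P (fun ω => U ω = u ∧ Y ω = 0 ∧ S ω = 1) ≠ 0 ∧
      cpr P (fun ω => A ω = a) (fun ω => U ω = u ∧ Y ω = 0 ∧ S ω = 1) ≠ 0 ∧
      cpr P (fun ω => Y ω = y) (fun ω => A ω = a ∧ U ω = u) ≠ 0 ∧
      cpr P (fun ω => S ω = 1) (fun ω => A ω = a ∧ Y ω = y ∧ U ω = u) ≠ 0)
    -- (i) Z ⊥ (Y, S) | (A, U)
    (hZ : CondIndep P Z (fun ω => (Y ω, S ω)) (fun ω => (A ω, U ω)))
    -- (ii) selection ratio free of treatment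
    (h : 𝒰 → ℝ)
    (hsel : ∀ (a : ℕ) (u : 𝒰), (a = 0 ∨ a = 1) →
      cpr P (fun ω => S ω = 1) (fun ω => A ω = a ∧ Y ω = 1 ∧ U ω = u) /
        cpr P (fun ω => S ω = 1) (fun ω => A ω = a ∧ Y ω = 0 ∧ U ω = u) =
          Real.exp (h u))
    -- (iii) homogeneous odds ratio
    (β₀' : ℝ)
    (hOR : ∀ u : 𝒰,
      cpr P (fun ω => Y ω = 1) (fun ω => A ω = 1 ∧ U ω = u) *
          cpr P (fun ω => Y ω = 0) (fun ω => A ω = 0 ∧ U ω = u) /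
        (cpr P (fun ω => Y ω = 1) (fun ω => A ω = 0 ∧ U ω = u) *
          cpr P (fun ω => Y ω = 0) (fun ω => A ω = 1 ∧ U ω = u)) =
            Real.exp β₀')
    -- (iv) alternative treatment confounding bridge function
    (qt : ℕ → 𝒵 → ℝ)
    (hqt : ∀ (a : ℕ) (u : 𝒰), (a = 0 ∨ a = 1) →
      cexp P (fun ω => qt a (Z ω)) (fun ω => A ω = a ∧ U ω = u) =
        (cpr P (fun ω => A ω = a) (fun ω => U ω = u ∧ Y ω = 0 ∧ S ω = 1))⁻¹) :
    ∀ u : 𝒰, pr P (fun ω => U ω = u ∧ S ω = 1) ≠ 0 →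
      cexp P (fun ω => (-1 : ℝ) ^ (1 - A ω) * qt (A ω) (Z ω) *
          (Y ω : ℝ) * Real.exp (-β₀' * (A ω : ℝ)))
        (fun ω => U ω = u ∧ S ω = 1) = 0 := by
  intro u hUS
  -- Key computation for each treatment arm
  have key : ∀ a : ℕ, a = 0 ∨ a = 1 →
      (∑ ω, if A ω = a ∧ Y ω = 1 ∧ S ω = 1 ∧ U ω = u then qt a (Z ω) * P ω else 0)
        = Real.exp (h u) * pr P (fun ω => U ω = u ∧ Y ω = 0 ∧ S ω = 1)
          * pr P (fun ω => A ω = a ∧ Y ω = 1 ∧ U ω = u)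
          / pr P (fun ω => A ω = a ∧ Y ω = 0 ∧ U ω = u) := by
    intro a ha
    obtain ⟨hN1, hD, hcA, -, -⟩ := hpos a 1 u ha (Or.inr rfl)
    obtain ⟨hN0, -, -, -, -⟩ := hpos a 0 u ha (Or.inl rfl)
    have hM : pr P (fun ω => A ω = a ∧ U ω = u) ≠ 0 :=
      pr_ne P hP (fun ω hω => ⟨hω.1, hω.2.2⟩) hN1
    simp only [cpr] at hcA
    have hSa0 : pr P (fun ω => A ω = a ∧ (U ω = u ∧ Y ω = 0 ∧ S ω = 1)) ≠ 0 := by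
      intro h0; apply hcA; rw [h0, zero_div]
    -- bridge equation: Q * Sa0 = D * M
    have hq := hqt a u ha
    simp only [cexp, cpr] at hq
    rw [show (∑ x : Ω, if A x = a ∧ U x = u then qt a (Z x) * P x else 0)
        = ∑ z, qt a z * pr P (fun ω => Z ω = z ∧ (A ω = a ∧ U ω = u))
        from sum_fiber P Z (qt a) (fun ω => A ω = a ∧ U ω = u)] at hq
    rw [inv_div, div_eq_div_iff hM hSa0] at hq
    -- conditional independence per z
    have e0 : pr P (fun ω => (A ω, U ω) = (a, u)) = pr P (fun ω => A ω = a ∧ U ω = u) :=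
      pr_congr P (fun ω => by simp)
    have j : ∀ z : 𝒵,
        pr P (fun ω => Z ω = z ∧ A ω = a ∧ Y ω = 1 ∧ S ω = 1 ∧ U ω = u) *
          pr P (fun ω => A ω = a ∧ U ω = u)
        = pr P (fun ω => Z ω = z ∧ (A ω = a ∧ U ω = u)) *
          pr P (fun ω => A ω = a ∧ Y ω = 1 ∧ S ω = 1 ∧ U ω = u) := by
      intro z
      have h2 := hZ z (1, 1) (a, u) (by rw [e0]; exact hM)
      simp only [cpr, Prod.mk.injEq] at h2
      rw [pr_congr P (show ∀ ω, ((Z ω = z ∧ (Y ω = 1 ∧ S ω = 1)) ∧ (A ω = a ∧ U ω = u)) ↔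
              (Z ω = z ∧ A ω = a ∧ Y ω = 1 ∧ S ω = 1 ∧ U ω = u) from fun ω => by tauto),
          pr_congr P (show ∀ ω, ((Y ω = 1 ∧ S ω = 1) ∧ (A ω = a ∧ U ω = u)) ↔
              (A ω = a ∧ Y ω = 1 ∧ S ω = 1 ∧ U ω = u) from fun ω => by tauto)] at h2
      rw [div_mul_div_comm, div_eq_div_iff hM (mul_ne_zero hM hM)] at h2
      apply mul_right_cancel₀ hM
      linear_combination h2
    -- selection ratio
    have h4 := hsel a u ha
    simp only [cpr] at h4
    rw [pr_congr P (show ∀ ω, (S ω = 1 ∧ (A ω = a ∧ Y ω = 1 ∧ U ω = u)) ↔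
            (A ω = a ∧ Y ω = 1 ∧ S ω = 1 ∧ U ω = u) from fun ω => by tauto),
        pr_congr P (show ∀ ω, (S ω = 1 ∧ (A ω = a ∧ Y ω = 0 ∧ U ω = u)) ↔
            (A ω = a ∧ (U ω = u ∧ Y ω = 0 ∧ S ω = 1)) from fun ω => by tauto)] at h4
    have sel : pr P (fun ω => A ω = a ∧ Y ω = 1 ∧ S ω = 1 ∧ U ω = u) *
        pr P (fun ω => A ω = a ∧ Y ω = 0 ∧ U ω = u)
        = Real.exp (h u) * pr P (fun ω => A ω = a ∧ (U ω = u ∧ Y ω = 0 ∧ S ω = 1)) *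
          pr P (fun ω => A ω = a ∧ Y ω = 1 ∧ U ω = u) := by
      field_simp [hN1, hN0, hSa0] at h4
      linear_combination h4
    -- assemble
    rw [sum_fiber P Z (qt a) (fun ω => A ω = a ∧ Y ω = 1 ∧ S ω = 1 ∧ U ω = u),
        eq_div_iff hN0]
    have hTM : (∑ z, qt a z * pr P (fun ω => Z ω = z ∧ (A ω = a ∧ Y ω = 1 ∧ S ω = 1 ∧ U ω = u))) *
        pr P (fun ω => A ω = a ∧ U ω = u)
        = (∑ z, qt a z * pr P (fun ω => Z ω = z ∧ (A ω = a ∧ U ω = u))) *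
          pr P (fun ω => A ω = a ∧ Y ω = 1 ∧ S ω = 1 ∧ U ω = u) := by
      rw [Finset.sum_mul, Finset.sum_mul]
      exact Finset.sum_congr rfl fun z _ => by linear_combination qt a z * j z
    apply mul_right_cancel₀ (mul_ne_zero hM hSa0)
    linear_combination (pr P (fun ω => A ω = a ∧ Y ω = 0 ∧ U ω = u) *
        pr P (fun ω => A ω = a ∧ (U ω = u ∧ Y ω = 0 ∧ S ω = 1))) * hTM
      + (pr P (fun ω => A ω = a ∧ Y ω = 1 ∧ S ω = 1 ∧ U ω = u) *
        pr P (fun ω => A ω = a ∧ Y ω = 0 ∧ U ω = u)) * hq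
      + (pr P (fun ω => A ω = a ∧ U ω = u) *
        pr P (fun ω => U ω = u ∧ Y ω = 0 ∧ S ω = 1)) * sel
  -- split the estimating function sum
  have hnum : (∑ ω, if U ω = u ∧ S ω = 1 then
      ((-1:ℝ) ^ (1 - A ω) * qt (A ω) (Z ω) * (Y ω : ℝ) * Real.exp (-β₀' * (A ω : ℝ))) * P ω else 0)
      = Real.exp (-β₀') * (∑ ω, if A ω = 1 ∧ Y ω = 1 ∧ S ω = 1 ∧ U ω = u then qt 1 (Z ω) * P ω else 0)
        - (∑ ω, if A ω = 0 ∧ Y ω = 1 ∧ S ω = 1 ∧ U ω = u then qt 0 (Z ω) * P ω else 0) := by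
    rw [Finset.mul_sum, ← Finset.sum_sub_distrib]
    refine Finset.sum_congr rfl fun ω _ => ?_
    rcases hS ω with hs | hs
    · simp [hs]
    · rcases hY ω with hy | hy
      · by_cases hu : U ω = u <;> simp [hs, hy, hu]
      · rcases hA ω with ha | ha
        · by_cases hu : U ω = u <;> simp [hs, hy, ha, hu] <;> ring
        · by_cases hu : U ω = u <;> simp [hs, hy, ha, hu] <;> ring
  -- odds ratio identity
  obtain ⟨hN11, -, -, -, -⟩ := hpos 1 1 u (Or.inr rfl) (Or.inr rfl)
  obtain ⟨hN10, -, -, -, -⟩ := hpos 1 0 u (Or.inr rfl) (Or.inl rfl)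
  obtain ⟨hN01, -, -, -, -⟩ := hpos 0 1 u (Or.inl rfl) (Or.inr rfl)
  obtain ⟨hN00, -, -, -, -⟩ := hpos 0 0 u (Or.inl rfl) (Or.inl rfl)
  have hM1 : pr P (fun ω => A ω = 1 ∧ U ω = u) ≠ 0 :=
    pr_ne P hP (fun ω hω => ⟨hω.1, hω.2.2⟩) hN11
  have hM0 : pr P (fun ω => A ω = 0 ∧ U ω = u) ≠ 0 :=
    pr_ne P hP (fun ω hω => ⟨hω.1, hω.2.2⟩) hN01
  have h5 := hOR u
  simp only [cpr] at h5
  rw [pr_congr P (show ∀ ω, (Y ω = 1 ∧ (A ω = 1 ∧ U ω = u)) ↔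
          (A ω = 1 ∧ Y ω = 1 ∧ U ω = u) from fun ω => by tauto),
      pr_congr P (show ∀ ω, (Y ω = 0 ∧ (A ω = 0 ∧ U ω = u)) ↔
          (A ω = 0 ∧ Y ω = 0 ∧ U ω = u) from fun ω => by tauto),
      pr_congr P (show ∀ ω, (Y ω = 1 ∧ (A ω = 0 ∧ U ω = u)) ↔
          (A ω = 0 ∧ Y ω = 1 ∧ U ω = u) from fun ω => by tauto),
      pr_congr P (show ∀ ω, (Y ω = 0 ∧ (A ω = 1 ∧ U ω = u)) ↔
          (A ω = 1 ∧ Y ω = 0 ∧ U ω = u) from fun ω => by tauto)] at h5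
  have hORkey : pr P (fun ω => A ω = 1 ∧ Y ω = 1 ∧ U ω = u) *
      pr P (fun ω => A ω = 0 ∧ Y ω = 0 ∧ U ω = u)
      = Real.exp β₀' * (pr P (fun ω => A ω = 0 ∧ Y ω = 1 ∧ U ω = u) *
        pr P (fun ω => A ω = 1 ∧ Y ω = 0 ∧ U ω = u)) := by
    apply mul_right_cancel₀ (mul_ne_zero hM0 hM1)
    field_simp [hM1, hM0, hN01, hN10] at h5
    linear_combination (pr P (fun ω => A ω = 0 ∧ U ω = u) * pr P (fun ω => A ω = 1 ∧ U ω = u)) * h5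
  -- finish
  simp only [cexp]
  rw [hnum, key 1 (Or.inr rfl), key 0 (Or.inl rfl)]
  rw [div_eq_zero_iff]
  left
  rw [Real.exp_neg]
  field_simp [hN10, hN00, Real.exp_ne_zero]
  linear_combination (Real.exp (h u) * pr P (fun ω => U ω = u ∧ Y ω = 0 ∧ S ω = 1)) * hORkey
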